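/- arXiv:0805.2276 — 2 statements merged into one kernel-verified Lean document; each statement's English description precedes it below -/
import Mathlib

section
/- Double robustness, part 1 (correct outcome model): If δ ∈ {0,1}, G(Ỹ) is integrable, 𝓕(X̃,Z̃) = E[G(Ỹ) | X̃,Z̃], and π̃(X̃,Z̃) is any measurable function with values in (0,1] (possibly misspecified), and if δ is conditionally independent of Ỹ given (X̃,Z̃), then E[ (δ/π̃) (G(Ỹ) - 𝓕(X̃,Z̃)) ] = 0, and hence E[ (δ/π̃) G(Ỹ) + (1 - δ/π̃) 𝓕(X̃,Z̃) ] = E[G(Ỹ)]. -/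
open MeasureTheory ProbabilityTheory


lemma aux_ae_indepFun {Ω : Type*} {m' : MeasurableSpace Ω} [mΩ : MeasurableSpace Ω]
    [StandardBorelSpace Ω] [Nonempty Ω]
    (hm' : m' ≤ mΩ) (μ : Measure Ω) [IsProbabilityMeasure μ]
    {f g : Ω → ℝ} (hf : Measurable f) (hg : Measurable g)
    (hCI : CondIndepFun m' hm' f g μ) :
    ∀ᵐ ω ∂μ, IndepFun f g (condExpKernel μ m' ω) := by
  have key : ∀ᵐ ω ∂(μ.trim hm'), ∀ q r : ℚ,
      condExpKernel μ m' ω (f ⁻¹' Set.Iic (q:ℝ) ∩ g ⁻¹' Set.Iic (r:ℝ))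
        = condExpKernel μ m' ω (f ⁻¹' Set.Iic (q:ℝ))
          * condExpKernel μ m' ω (g ⁻¹' Set.Iic (r:ℝ)) := by
    rw [ae_all_iff]; intro q; rw [ae_all_iff]; intro r
    exact hCI _ _ ⟨Set.Iic (q:ℝ), measurableSet_Iic, rfl⟩
      ⟨Set.Iic (r:ℝ), measurableSet_Iic, rfl⟩
  refine ae_of_ae_trim hm' (key.mono fun ω hω => ?_)
  have hgen : (Real.measurableSpace : MeasurableSpace ℝ) =
      MeasurableSpace.generateFrom (⋃ a : ℚ, {Set.Iic (a : ℝ)}) :=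
    Real.borel_eq_generateFrom_Iic_rat
  refine IndepSets.indep (hf.comap_le) (hg.comap_le)
    (Real.isPiSystem_Iic_rat.comap f) (Real.isPiSystem_Iic_rat.comap g) ?_ ?_ ?_
  · rw [hgen, MeasurableSpace.comap_generateFrom]; rfl
  · rw [hgen, MeasurableSpace.comap_generateFrom]; rfl
  · rintro s t ⟨s', hs', rfl⟩ ⟨t', ht', rfl⟩
    simp only [Set.mem_iUnion, Set.mem_singleton_iff] at hs' ht'
    obtain ⟨q, rfl⟩ := hs'; obtain ⟨r, rfl⟩ := ht'
    exact ae_of_all _ fun _ => hω q r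
lemma aux_main {Ω : Type*} {m' : MeasurableSpace Ω} [mΩ : MeasurableSpace Ω]
    [StandardBorelSpace Ω] [Nonempty Ω]
    (hm' : m' ≤ mΩ) (μ : Measure Ω) [IsProbabilityMeasure μ]
    (δ g F p : Ω → ℝ)
    (hδ : Measurable δ) (hδ01 : ∀ ω, δ ω = 0 ∨ δ ω = 1)
    (hg : Measurable g) (hgint : Integrable g μ)
    (hFm : Measurable[m'] F) (hFcond : F =ᵐ[μ] μ[g | m'])
    (hpm : Measurable[m'] p)
    (hCI : CondIndepFun m' hm' δ g μ)
    (hint1 : Integrable (fun ω => (δ ω / p ω) * (g ω - F ω)) μ) :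
    (∫ ω, (δ ω / p ω) * (g ω - F ω) ∂μ = 0) ∧
    (∫ ω, ((δ ω / p ω) * g ω + (1 - δ ω / p ω) * F ω) ∂μ = ∫ ω, g ω ∂μ) := by
  have hδ1 : ∀ ω, ‖δ ω‖ ≤ 1 := by
    intro ω; rcases hδ01 ω with h | h <;> simp [h]
  have hδint : Integrable δ μ :=
    (integrable_const (1 : ℝ)).mono' hδ.aestronglyMeasurable (Filter.Eventually.of_forall hδ1)
  have hFsm : StronglyMeasurable[m'] F := hFm.stronglyMeasurable
  have hFint : Integrable F μ := integrable_condExp.congr hFcond.symm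
  have hπm' : Measurable[m'] (fun ω => (p ω)⁻¹) := hpm.inv
  have hδg_int : Integrable (fun ω => δ ω * g ω) μ :=
    hgint.bdd_mul hδ.aestronglyMeasurable (Filter.Eventually.of_forall hδ1)
  have hδF_int : Integrable (fun ω => δ ω * F ω) μ :=
    hFint.bdd_mul hδ.aestronglyMeasurable (Filter.Eventually.of_forall hδ1)
  have hae := aux_ae_indepFun hm' μ hδ hg hCI
  have hδκ : ∀ᵐ ω ∂μ, Integrable δ (condExpKernel μ m' ω) := hδint.condExpKernel_ae
  have hgκ : ∀ᵐ ω ∂μ, Integrable g (condExpKernel μ m' ω) := hgint.condExpKernel_ae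
  have hprod : μ[fun ω => δ ω * g ω | m'] =ᵐ[μ]
      fun ω => (μ[δ | m']) ω * (μ[g | m']) ω := by
    have h1 := condExp_ae_eq_integral_condExpKernel (f := fun ω => δ ω * g ω) hm' hδg_int
    have h2 := condExp_ae_eq_integral_condExpKernel (f := δ) hm' hδint
    have h3 := condExp_ae_eq_integral_condExpKernel (f := g) hm' hgint
    filter_upwards [h1, h2, h3, hae, hδκ, hgκ] with ω e1 e2 e3 hi hδi hgi
    rw [e1, e2, e3]
    have := IndepFun.integral_mul_eq_mul_integral hi hδi.1 hgi.1
    simpa [Pi.mul_apply] using this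
  have hFδ_int : Integrable (F * δ) μ := by
    have : (F * δ) = fun ω => δ ω * F ω := by funext ω; simp [mul_comm]
    rw [this]; exact hδF_int
  have hcondF : μ[fun ω => δ ω * F ω | m'] =ᵐ[μ] fun ω => F ω * (μ[δ | m']) ω := by
    have h := condExp_mul_of_stronglyMeasurable_left hFsm hFδ_int hδint
    have heq : (F * δ) = fun ω => δ ω * F ω := by funext ω; simp [mul_comm]
    rw [heq] at h
    exact h
  have hδGF_int : Integrable (fun ω => δ ω * (g ω - F ω)) μ :=
    (hgint.sub hFint).bdd_mul hδ.aestronglyMeasurable (Filter.Eventually.of_forall hδ1)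
  have hkey : μ[fun ω => δ ω * (g ω - F ω) | m'] =ᵐ[μ] 0 := by
    have hsub : (fun ω => δ ω * (g ω - F ω))
        = (fun ω => δ ω * g ω) - (fun ω => δ ω * F ω) := by
      funext ω; simp [mul_sub]
    rw [hsub]
    have h1 := condExp_sub (m := m') hδg_int hδF_int
    filter_upwards [h1, hprod, hcondF, hFcond] with ω e1 e2 e3 e4
    simp only [Pi.sub_apply, Pi.zero_apply] at *
    rw [e1, e2, e3, e4]
    ring
  have hrw1 : (fun ω => (δ ω / p ω) * (g ω - F ω))
      = fun ω => (p ω)⁻¹ * (δ ω * (g ω - F ω)) := by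
    funext ω; rw [div_eq_mul_inv]; ring
  have hpi_int : Integrable ((fun ω => (p ω)⁻¹) * fun ω => δ ω * (g ω - F ω)) μ := by
    have : ((fun ω => (p ω)⁻¹) * fun ω => δ ω * (g ω - F ω))
        = fun ω => (δ ω / p ω) * (g ω - F ω) := by
      funext ω; simp only [Pi.mul_apply]; rw [div_eq_mul_inv]; ring
    rw [this]; exact hint1
  have hmain : μ[fun ω => (p ω)⁻¹ * (δ ω * (g ω - F ω)) | m'] =ᵐ[μ] 0 := by
    have h := condExp_mul_of_stronglyMeasurable_left hπm'.stronglyMeasurable hpi_int hδGF_int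
    have heq : ((fun ω => (p ω)⁻¹) * fun ω => δ ω * (g ω - F ω))
        = fun ω => (p ω)⁻¹ * (δ ω * (g ω - F ω)) := rfl
    rw [heq] at h
    filter_upwards [h, hkey] with ω e1 e2
    simp only [Pi.mul_apply, Pi.zero_apply] at *
    rw [e1, e2, mul_zero]
  have part1 : ∫ ω, (δ ω / p ω) * (g ω - F ω) ∂μ = 0 := by
    calc ∫ ω, (δ ω / p ω) * (g ω - F ω) ∂μ
        = ∫ ω, (p ω)⁻¹ * (δ ω * (g ω - F ω)) ∂μ := by rw [hrw1]
      _ = ∫ ω, (μ[fun ω' => (p ω')⁻¹ * (δ ω' * (g ω' - F ω')) | m']) ω ∂μ := by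
          rw [integral_condExp hm']
      _ = 0 := integral_eq_zero_of_ae hmain
  refine ⟨part1, ?_⟩
  have hrw2 : (fun ω => (δ ω / p ω) * g ω + (1 - δ ω / p ω) * F ω)
      = fun ω => (δ ω / p ω) * (g ω - F ω) + F ω := by
    funext ω; ring
  calc ∫ ω, ((δ ω / p ω) * g ω + (1 - δ ω / p ω) * F ω) ∂μ
      = ∫ ω, ((δ ω / p ω) * (g ω - F ω) + F ω) ∂μ := by rw [hrw2]
    _ = (∫ ω, (δ ω / p ω) * (g ω - F ω) ∂μ) + ∫ ω, F ω ∂μ := integral_add hint1 hFint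
    _ = ∫ ω, F ω ∂μ := by rw [part1, zero_add]
    _ = ∫ ω, (μ[g | m']) ω ∂μ := integral_congr_ae hFcond
    _ = ∫ ω, g ω ∂μ := integral_condExp hm'

/-- Double robustness, part 1 (correct outcome model): with a possibly misspecified
propensity π̃ ∈ (0,1] but correct conditional mean 𝓕(X̃,Z̃) = E[G(Ỹ)|X̃,Z̃], and δ
conditionally independent of Ỹ given (X̃,Z̃),
E[(δ/π̃)(G(Ỹ) - 𝓕(X̃,Z̃))] = 0 and E[(δ/π̃)G(Ỹ) + (1 - δ/π̃)𝓕(X̃,Z̃)] = E[G(Ỹ)]. -/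
theorem stmt7 {Ω α β γ : Type*} [MeasurableSpace Ω] [StandardBorelSpace Ω] [Nonempty Ω]
    [MeasurableSpace α] [MeasurableSpace β] [MeasurableSpace γ]
    (μ : Measure Ω) [IsProbabilityMeasure μ]
    (Y : Ω → γ) (X : Ω → α) (Z : Ω → β)
    (hY : Measurable Y) (hX : Measurable X) (hZ : Measurable Z)
    (δ : Ω → ℝ) (hδ : Measurable δ) (hδ01 : ∀ ω, δ ω = 0 ∨ δ ω = 1)
    (G : γ → ℝ) (hG : Measurable G) (hGint : Integrable (fun ω => G (Y ω)) μ)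
    (πt : α × β → ℝ) (hπt : Measurable πt)
    (hπt01 : ∀ p, πt p ∈ Set.Ioc (0 : ℝ) 1)
    (hle : MeasurableSpace.comap (fun ω => (X ω, Z ω)) inferInstance ≤ ‹MeasurableSpace Ω›)
    (hCI : CondIndepFun (MeasurableSpace.comap (fun ω => (X ω, Z ω)) inferInstance) hle
      δ (fun ω => G (Y ω)) μ)
    (F : α × β → ℝ) (hF : Measurable F)
    (hFcond : (fun ω => F (X ω, Z ω)) =ᵐ[μ]
      μ[(fun ω => G (Y ω)) | MeasurableSpace.comap (fun ω => (X ω, Z ω)) inferInstance])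
    (hint1 : Integrable (fun ω => (δ ω / πt (X ω, Z ω)) * (G (Y ω) - F (X ω, Z ω))) μ)
    (hint2 : Integrable (fun ω =>
      (δ ω / πt (X ω, Z ω)) * G (Y ω) + (1 - δ ω / πt (X ω, Z ω)) * F (X ω, Z ω)) μ) :
    (∫ ω, (δ ω / πt (X ω, Z ω)) * (G (Y ω) - F (X ω, Z ω)) ∂μ = 0) ∧
    (∫ ω, ((δ ω / πt (X ω, Z ω)) * G (Y ω)
        + (1 - δ ω / πt (X ω, Z ω)) * F (X ω, Z ω)) ∂μ = ∫ ω, G (Y ω) ∂μ) := by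
  have hpairm : Measurable[MeasurableSpace.comap (fun ω => (X ω, Z ω)) inferInstance]
      (fun ω => (X ω, Z ω)) := fun s hs => ⟨s, hs, rfl⟩
  exact aux_main hle μ δ (fun ω => G (Y ω)) (fun ω => F (X ω, Z ω)) (fun ω => πt (X ω, Z ω))
    hδ hδ01 (hG.comp hY) hGint (hF.comp hpairm) hFcond (hπt.comp hpairm) hCI hint1
end

section
/- Double robustness, part 2 (correct propensity model): If δ ∈ {0,1} with E[δ | Ỹ, X̃, Z̃] = π(X̃, Z̃) > 0 a.s., G(Ỹ) is integrable, and 𝓕̃(X̃,Z̃) is any integrable measurable function (possibly a misspecified conditional mean), then E[ (δ/π) G(Ỹ) + (1 - δ/π) 𝓕̃(X̃,Z̃) ] = E[G(Ỹ)]. -/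
open MeasureTheory

private lemma stmt8_aux {Ω : Type*} {m m0 : MeasurableSpace Ω} (hm : m ≤ m0)
    (μ : @Measure Ω m0) [IsFiniteMeasure μ] (f d : Ω → ℝ)
    (hfm : StronglyMeasurable[m] f) (hfd : Integrable (f * d) μ) (hd : Integrable d μ) :
    ∫ ω, (f * d) ω ∂μ = ∫ ω, (f * μ[d|m]) ω ∂μ := by
  exact (integral_condExp hm (f := f * d)).symm.trans
    (integral_congr_ae (condExp_mul_of_stronglyMeasurable_left hfm hfd hd))

/-- Double robustness, part 2 (correct propensity model): if E[δ | Ỹ,X̃,Z̃] = π(X̃,Z̃) > 0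
a.s. and 𝓕̃(X̃,Z̃) is any integrable (possibly misspecified) function, then
E[(δ/π)G(Ỹ) + (1 - δ/π)𝓕̃(X̃,Z̃)] = E[G(Ỹ)]. -/
theorem stmt8 {Ω α β γ : Type*} [MeasurableSpace Ω] [MeasurableSpace α] [MeasurableSpace β]
    [MeasurableSpace γ]
    (μ : Measure Ω) [IsProbabilityMeasure μ]
    (Y : Ω → γ) (X : Ω → α) (Z : Ω → β)
    (hY : Measurable Y) (hX : Measurable X) (hZ : Measurable Z)
    (δ : Ω → ℝ) (hδ : Measurable δ) (hδ01 : ∀ ω, δ ω = 0 ∨ δ ω = 1)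
    (g : α × β → ℝ) (hg : Measurable g)
    (hMAR : (fun ω => g (X ω, Z ω)) =ᵐ[μ]
      μ[δ | MeasurableSpace.comap (fun ω => (Y ω, X ω, Z ω)) inferInstance])
    (hpos : ∀ᵐ ω ∂μ, 0 < g (X ω, Z ω))
    (G : γ → ℝ) (hG : Measurable G) (hGint : Integrable (fun ω => G (Y ω)) μ)
    (Ft : α × β → ℝ) (hFt : Measurable Ft)
    (hFtint : Integrable (fun ω => Ft (X ω, Z ω)) μ)
    (hint : Integrable (fun ω =>
      (δ ω / g (X ω, Z ω)) * G (Y ω) + (1 - δ ω / g (X ω, Z ω)) * Ft (X ω, Z ω)) μ) :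
    ∫ ω, ((δ ω / g (X ω, Z ω)) * G (Y ω)
        + (1 - δ ω / g (X ω, Z ω)) * Ft (X ω, Z ω)) ∂μ = ∫ ω, G (Y ω) ∂μ := by
  have hT : Measurable (fun ω => (Y ω, X ω, Z ω)) := hY.prodMk (hX.prodMk hZ)
  have hm : MeasurableSpace.comap (fun ω => (Y ω, X ω, Z ω)) inferInstance
      ≤ ‹MeasurableSpace Ω› := measurable_iff_comap_le.mp hT
  set f : Ω → ℝ := fun ω => (G (Y ω) - Ft (X ω, Z ω)) / g (X ω, Z ω) with hf_def
  have hfm : StronglyMeasurable[MeasurableSpace.comap (fun ω => (Y ω, X ω, Z ω))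
      inferInstance] f := by
    have hTm : @Measurable Ω (γ × α × β)
        (MeasurableSpace.comap (fun ω => (Y ω, X ω, Z ω)) inferInstance) _
        (fun ω => (Y ω, X ω, Z ω)) := measurable_iff_comap_le.mpr le_rfl
    have hh : Measurable (fun p : γ × α × β => (G p.1 - Ft p.2) / g p.2) :=
      ((hG.comp measurable_fst).sub (hFt.comp measurable_snd)).div (hg.comp measurable_snd)
    exact (hh.comp hTm).stronglyMeasurable
  have hδint : Integrable δ μ := by
    refine (integrable_const (1 : ℝ)).mono hδ.aestronglyMeasurable ?_
    filter_upwards with ω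
    rcases hδ01 ω with h | h <;> simp [h]
  have hfδ_eq : f * δ = fun ω =>
      ((δ ω / g (X ω, Z ω)) * G (Y ω) + (1 - δ ω / g (X ω, Z ω)) * Ft (X ω, Z ω))
        - Ft (X ω, Z ω) := by
    funext ω; simp only [hf_def, Pi.mul_apply]; ring
  have hfδint : Integrable (f * δ) μ := by
    rw [hfδ_eq]; exact hint.sub hFtint
  have key : ∫ ω, (f * δ) ω ∂μ = ∫ ω, (G (Y ω) - Ft (X ω, Z ω)) ∂μ := by
    rw [stmt8_aux hm μ f δ hfm hfδint hδint]
    refine integral_congr_ae ?_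
    filter_upwards [hMAR, hpos] with ω hω hωpos
    simp only [Pi.mul_apply, hf_def, ← hω]
    rw [div_mul_cancel₀ _ (ne_of_gt hωpos)]
  have hsum : (fun ω =>
      (δ ω / g (X ω, Z ω)) * G (Y ω) + (1 - δ ω / g (X ω, Z ω)) * Ft (X ω, Z ω))
      = fun ω => Ft (X ω, Z ω) + (f * δ) ω := by
    funext ω; simp only [hf_def, Pi.mul_apply]; ring
  calc ∫ ω, ((δ ω / g (X ω, Z ω)) * G (Y ω)
        + (1 - δ ω / g (X ω, Z ω)) * Ft (X ω, Z ω)) ∂μ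
      = ∫ ω, (Ft (X ω, Z ω) + (f * δ) ω) ∂μ := by rw [← hsum]
    _ = ∫ ω, Ft (X ω, Z ω) ∂μ + ∫ ω, (f * δ) ω ∂μ := integral_add hFtint hfδint
    _ = ∫ ω, Ft (X ω, Z ω) ∂μ + (∫ ω, G (Y ω) ∂μ - ∫ ω, Ft (X ω, Z ω) ∂μ) := by
        rw [key, integral_sub hGint hFtint]
    _ = ∫ ω, G (Y ω) ∂μ := by ring
end
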